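/- Let w : ℝ → [0,∞) be integrable and define φ : ℓ∞(ℝ) × ℓ∞(ℝ) → ℝ by φ(θ) = ∫ max{θ⁽¹⁾(u) − θ⁽²⁾(u), 0} w(u) du. Then φ is Hadamard directionally differentiable at every θ = (θ⁽¹⁾, θ⁽²⁾), with derivative φ'_θ(h) = ∫_{B₊(θ)} (h⁽¹⁾(u) − h⁽²⁾(u)) w(u) du + ∫_{B₀(θ)} max{h⁽¹⁾(u) − h⁽²⁾(u), 0} w(u) du, where B₊(θ) = {u : θ⁽¹⁾(u) > θ⁽²⁾(u)} and B₀(θ) = {u : θ⁽¹⁾(u) = θ⁽²⁾(u)}. -/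

import Mathlib

open Filter Topology MeasureTheory

/-- Hadamard directional differentiability of the functional
θ ↦ ∫ max{θ⁽¹⁾ − θ⁽²⁾, 0} w at any θ = (θ⁽¹⁾, θ⁽²⁾), along any sequence tₙ ↓ 0 and any
uniformly convergent sequence of (bounded measurable) directions. -/
theorem statement12 (w : ℝ → ℝ) (hw0 : ∀ u, 0 ≤ w u) (hw : Integrable w)
    (θ1 θ2 h1 h2 : ℝ → ℝ)
    (hθ1 : Measurable θ1) (hθ2 : Measurable θ2)
    (hh1 : Measurable h1) (hh2 : Measurable h2)
    (hθb : ∃ M, ∀ u, |θ1 u| ≤ M ∧ |θ2 u| ≤ M)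
    (hhb : ∃ M, ∀ u, |h1 u| ≤ M ∧ |h2 u| ≤ M)
    (t : ℕ → ℝ) (ht : ∀ n, 0 < t n) (ht0 : Tendsto t atTop (𝓝 0))
    (H1 H2 : ℕ → ℝ → ℝ)
    (hH1 : ∀ n, Measurable (H1 n)) (hH2 : ∀ n, Measurable (H2 n))
    (hHb : ∀ n, ∃ M, ∀ u, |H1 n u| ≤ M ∧ |H2 n u| ≤ M)
    (hu1 : TendstoUniformly H1 h1 atTop) (hu2 : TendstoUniformly H2 h2 atTop) :
    Tendsto (fun n =>
        ((∫ u, max (θ1 u + t n * H1 n u - (θ2 u + t n * H2 n u)) 0 * w u) -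
          ∫ u, max (θ1 u - θ2 u) 0 * w u) / t n) atTop
      (𝓝 ((∫ u in {u | θ2 u < θ1 u}, (h1 u - h2 u) * w u) +
          ∫ u in {u | θ1 u = θ2 u}, max (h1 u - h2 u) 0 * w u)) := by
  classical
  obtain ⟨Mh, hMh⟩ := hhb
  obtain ⟨Mθ, hMθ⟩ := hθb
  -- integrability helper
  have key : ∀ (f : ℝ → ℝ), Measurable f → (∃ C, ∀ u, |f u| ≤ C) →
      Integrable (fun u => f u * w u) := by
    rintro f hf ⟨C, hC⟩
    exact hw.bdd_mul (c := C) hf.aestronglyMeasurable (Eventually.of_forall fun u => by simpa using hC u)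
  -- pointwise convergence of the directions
  have hk : ∀ u, Tendsto (fun n => H1 n u - H2 n u) atTop (𝓝 (h1 u - h2 u)) :=
    fun u => (hu1.tendsto_at u).sub (hu2.tendsto_at u)
  -- the difference quotient as an integrand
  set F : ℕ → ℝ → ℝ := fun n u =>
    (max (θ1 u - θ2 u + t n * (H1 n u - H2 n u)) 0 - max (θ1 u - θ2 u) 0) / t n * w u with hFdef
  -- the limit integrand
  set L : ℝ → ℝ := fun u =>
    (if θ2 u < θ1 u then h1 u - h2 u else if θ1 u = θ2 u then max (h1 u - h2 u) 0 else 0)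
      * w u with hLdef
  -- measurable sets
  have hS1 : MeasurableSet {u : ℝ | θ2 u < θ1 u} := measurableSet_lt hθ2 hθ1
  have hS2 : MeasurableSet {u : ℝ | θ1 u = θ2 u} := measurableSet_eq_fun hθ1 hθ2
  -- integrability of indicator pieces
  have int1 : Integrable (fun u => (h1 u - h2 u) * w u) :=
    key _ (hh1.sub hh2) ⟨2 * Mh, fun u => by
      have := (hMh u).1; have := (hMh u).2
      calc |h1 u - h2 u| ≤ |h1 u| + |h2 u| := abs_sub _ _
        _ ≤ 2 * Mh := by linarith⟩
  have int2 : Integrable (fun u => max (h1 u - h2 u) 0 * w u) :=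
    key _ ((hh1.sub hh2).max measurable_const) ⟨2 * Mh, fun u => by
      have := (hMh u).1; have := (hMh u).2
      rw [abs_of_nonneg (le_max_right _ _)]
      refine max_le ?_ ?_
      · calc h1 u - h2 u ≤ |h1 u - h2 u| := le_abs_self _
          _ ≤ |h1 u| + |h2 u| := abs_sub _ _
          _ ≤ 2 * Mh := by linarith
      · have : (0:ℝ) ≤ |h1 u| := abs_nonneg _
        linarith [abs_nonneg (h2 u)]⟩
  -- the RHS equals ∫ L
  have hRHS : (∫ u in {u | θ2 u < θ1 u}, (h1 u - h2 u) * w u) +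
      ∫ u in {u | θ1 u = θ2 u}, max (h1 u - h2 u) 0 * w u = ∫ u, L u := by
    rw [← integral_indicator hS1, ← integral_indicator hS2,
      ← integral_add (int1.indicator hS1) (int2.indicator hS2)]
    congr 1; funext u
    by_cases hlt : θ2 u < θ1 u
    · have hne : ¬ θ1 u = θ2 u := by intro h; rw [h] at hlt; exact lt_irrefl _ hlt
      simp [Set.indicator, hlt, hne, hLdef]
    · by_cases heq : θ1 u = θ2 u
      · simp [Set.indicator, hlt, heq, hLdef]
      · simp [Set.indicator, hlt, heq, hLdef]
  -- integrability of prelimit integrands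
  have hInt1 : ∀ n, Integrable (fun u =>
      max (θ1 u + t n * H1 n u - (θ2 u + t n * H2 n u)) 0 * w u) := by
    intro n
    obtain ⟨Mn, hMn⟩ := hHb n
    refine key _ (((hθ1.add ((hH1 n).const_mul _)).sub
      (hθ2.add ((hH2 n).const_mul _))).max measurable_const)
      ⟨2 * Mθ + t n * (2 * Mn), fun u => ?_⟩
    have h1' := (hMθ u).1; have h2' := (hMθ u).2
    have h3' := (hMn u).1; have h4' := (hMn u).2
    have ha := abs_le.mp h1'; have hb := abs_le.mp h2'
    have hc := abs_le.mp h3'; have hd := abs_le.mp h4'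
    have htn := (ht n).le
    rw [abs_of_nonneg (le_max_right _ _)]
    refine max_le ?_ ?_
    · nlinarith [mul_le_mul_of_nonneg_left hc.2 htn, mul_le_mul_of_nonneg_left hd.1 htn]
    · nlinarith [abs_nonneg (θ1 u), abs_nonneg (H1 n u),
        mul_nonneg htn (abs_nonneg (H1 n u)), mul_nonneg htn (abs_nonneg (H2 n u)),
        mul_le_mul_of_nonneg_left h3' htn, mul_le_mul_of_nonneg_left h4' htn]
  have hInt2 : Integrable (fun u => max (θ1 u - θ2 u) 0 * w u) :=
    key _ ((hθ1.sub hθ2).max measurable_const) ⟨2 * Mθ, fun u => by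
      have := (hMθ u).1; have := (hMθ u).2
      rw [abs_of_nonneg (le_max_right _ _)]
      refine max_le ?_ (by linarith [abs_nonneg (θ1 u), abs_nonneg (θ2 u)])
      calc θ1 u - θ2 u ≤ |θ1 u - θ2 u| := le_abs_self _
        _ ≤ |θ1 u| + |θ2 u| := abs_sub _ _
        _ ≤ 2 * Mθ := by linarith⟩
  -- the difference quotient equals ∫ F n
  have hEq : ∀ n, ((∫ u, max (θ1 u + t n * H1 n u - (θ2 u + t n * H2 n u)) 0 * w u) -
      ∫ u, max (θ1 u - θ2 u) 0 * w u) / t n = ∫ u, F n u := by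
    intro n
    rw [← integral_sub (hInt1 n) hInt2, ← integral_div]
    congr 1; funext u
    have harg : θ1 u + t n * H1 n u - (θ2 u + t n * H2 n u)
        = θ1 u - θ2 u + t n * (H1 n u - H2 n u) := by ring
    simp only [hFdef, harg]
    ring
  -- a.e. (in fact everywhere) pointwise convergence
  have hlim : ∀ u, Tendsto (fun n => F n u) atTop (𝓝 (L u)) := by
    intro u
    have htk : Tendsto (fun n => t n * (H1 n u - H2 n u)) atTop (𝓝 0) := by
      simpa using ht0.mul (hk u)
    rcases lt_trichotomy (θ2 u) (θ1 u) with hlt | heq | hgt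
    · -- θ1 - θ2 > 0
      have hL : L u = (h1 u - h2 u) * w u := by simp [hLdef, hlt]
      rw [hL]
      refine Tendsto.congr' ?_ ((hk u).mul tendsto_const_nhds)
      have hev : ∀ᶠ n in atTop, -(θ1 u - θ2 u) < t n * (H1 n u - H2 n u) :=
        htk.eventually (eventually_gt_nhds (by linarith))
      filter_upwards [hev] with n hn
      have hpos : 0 < θ1 u - θ2 u + t n * (H1 n u - H2 n u) := by linarith
      simp only [hFdef]
      rw [max_eq_left hpos.le, max_eq_left (by linarith : (0:ℝ) ≤ θ1 u - θ2 u)]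
      have harg : θ1 u - θ2 u + t n * (H1 n u - H2 n u) - (θ1 u - θ2 u)
          = t n * (H1 n u - H2 n u) := by ring
      rw [harg, mul_div_cancel_left₀ _ (ht n).ne']
    · -- θ1 = θ2
      have heq' : θ1 u = θ2 u := heq.symm
      have hnlt : ¬ θ2 u < θ1 u := by rw [heq']; exact lt_irrefl _
      have hL : L u = max (h1 u - h2 u) 0 * w u := by simp [hLdef, hnlt, heq']
      rw [hL]
      refine Tendsto.congr' ?_ (((hk u).max tendsto_const_nhds).mul tendsto_const_nhds)
      refine Eventually.of_forall fun n => ?_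
      simp only [hFdef]
      have hz : θ1 u - θ2 u = 0 := by rw [heq']; ring
      rw [hz, zero_add, max_self]
      have : max (t n * (H1 n u - H2 n u)) 0 = t n * max (H1 n u - H2 n u) 0 := by
        rw [mul_max_of_nonneg _ _ (ht n).le, mul_zero]
      rw [this, sub_zero, mul_div_cancel_left₀ _ (ht n).ne']
    · -- θ1 - θ2 < 0
      have hnlt : ¬ θ2 u < θ1 u := not_lt.mpr hgt.le
      have hne : ¬ θ1 u = θ2 u := ne_of_lt hgt
      have hL : L u = 0 := by simp [hLdef, hnlt, hne]
      rw [hL]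
      refine Tendsto.congr' ?_ tendsto_const_nhds
      have hev : ∀ᶠ n in atTop, t n * (H1 n u - H2 n u) < -(θ1 u - θ2 u) :=
        htk.eventually (eventually_lt_nhds (by linarith))
      filter_upwards [hev] with n hn
      have hneg : θ1 u - θ2 u + t n * (H1 n u - H2 n u) ≤ 0 := by linarith
      simp only [hFdef]
      rw [max_eq_right hneg, max_eq_right (by linarith : θ1 u - θ2 u ≤ (0:ℝ))]
      simp
  -- bound, eventually in n
  have hbound : ∀ᶠ n in atTop, ∀ᵐ u : ℝ, ‖F n u‖ ≤ (2 * Mh + 2) * w u := by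
    have e1 := Metric.tendstoUniformly_iff.mp hu1 1 one_pos
    have e2 := Metric.tendstoUniformly_iff.mp hu2 1 one_pos
    filter_upwards [e1, e2] with n hn1 hn2
    refine Eventually.of_forall fun u => ?_
    have hd1 : |H1 n u - h1 u| < 1 := by
      have := hn1 u; rw [Real.dist_eq] at this; rw [abs_sub_comm]; exact this
    have hd2 : |H2 n u - h2 u| < 1 := by
      have := hn2 u; rw [Real.dist_eq] at this; rw [abs_sub_comm]; exact this
    have hkb : |H1 n u - H2 n u| ≤ 2 * Mh + 2 := by
      have ha := abs_le.mp hd1.le; have hb := abs_le.mp hd2.le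
      have hc := abs_le.mp (hMh u).1; have hd := abs_le.mp (hMh u).2
      rw [abs_le]; constructor <;> nlinarith
    have hquot : |max (θ1 u - θ2 u + t n * (H1 n u - H2 n u)) 0 - max (θ1 u - θ2 u) 0|
        ≤ t n * |H1 n u - H2 n u| := by
      calc |max (θ1 u - θ2 u + t n * (H1 n u - H2 n u)) 0 - max (θ1 u - θ2 u) 0|
          ≤ |θ1 u - θ2 u + t n * (H1 n u - H2 n u) - (θ1 u - θ2 u)| :=
            abs_max_sub_max_le_abs _ _ _
        _ = |t n * (H1 n u - H2 n u)| := by ring_nf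
        _ = t n * |H1 n u - H2 n u| := by rw [abs_mul, abs_of_pos (ht n)]
    simp only [hFdef, Real.norm_eq_abs, abs_mul, abs_div, abs_of_pos (ht n),
      abs_of_nonneg (hw0 u)]
    refine mul_le_mul_of_nonneg_right ?_ (hw0 u)
    rw [div_le_iff₀ (ht n)]
    calc |max (θ1 u - θ2 u + t n * (H1 n u - H2 n u)) 0 - max (θ1 u - θ2 u) 0|
        ≤ t n * |H1 n u - H2 n u| := hquot
      _ ≤ t n * (2 * Mh + 2) := mul_le_mul_of_nonneg_left hkb (ht n).le
      _ = (2 * Mh + 2) * t n := by ring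
  -- measurability of F n
  have hmeas : ∀ᶠ n in atTop, AEStronglyMeasurable (F n) volume := by
    refine Eventually.of_forall fun n => ?_
    have : Measurable (fun u =>
        (max (θ1 u - θ2 u + t n * (H1 n u - H2 n u)) 0 - max (θ1 u - θ2 u) 0) / t n) :=
      ((((hθ1.sub hθ2).add (((hH1 n).sub (hH2 n)).const_mul _)).max measurable_const).sub
        ((hθ1.sub hθ2).max measurable_const)).div_const _
    exact this.aestronglyMeasurable.mul hw.1
  -- bound integrable
  have hbint : Integrable (fun u => (2 * Mh + 2) * w u) := hw.const_mul _
  -- dominated convergence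
  have hDC : Tendsto (fun n => ∫ u, F n u) atTop (𝓝 (∫ u, L u)) :=
    tendsto_integral_filter_of_dominated_convergence _ hmeas hbound hbint
      (Eventually.of_forall hlim)
  rw [hRHS]
  exact Tendsto.congr (fun n => (hEq n).symm) hDC
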